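/- Let h be a positive self-adjoint operator on a separable Hilbert space with eigenvalues λ_n > 0 and orthonormal eigenbasis (u_n), such that tr h^{t-1} < ∞ for all t < t₀. Then the finite-dimensional Gaussian measures μ_{0,K} on span(u₀,…,u_K) with covariance diag(λ_j^{-1}) form a tight family in the Sobolev-type space ℌ^t for each t < t₀, since μ_{0,K}({u : ‖u‖_{ℌ^t} ≥ R}) ≤ R^{-2} tr[h^{t-1}] for all K. -/

import Mathlib

open MeasureTheory ProbabilityTheory Real
open scoped NNReal ENNReal

/-- The cylindrical Gaussian measure `μ_{0,K}` on `V_K = span(u₀,…,u_K)`, identified with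
`Fin (K+1) → ℝ × ℝ` via real and imaginary parts of the coordinates `⟨u, u_j⟩`; each
coordinate is a centered complex Gaussian of variance `λ_j⁻¹` (so each real component has
variance `1/(2 λ_j)`), corresponding to the density `∏ (λ_j/π) exp(-λ_j |⟨u,u_j⟩|²)`. -/
noncomputable def cylGaussian (lam : ℕ → ℝ) (K : ℕ) : Measure (Fin (K + 1) → ℝ × ℝ) :=
  Measure.pi fun j =>
    (gaussianReal 0 (Real.toNNReal (1 / (2 * lam j)))).prod
      (gaussianReal 0 (Real.toNNReal (1 / (2 * lam j))))

lemma integral_sq_gauss {b : ℝ} (hb : 0 < b) :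
    ∫ x : ℝ, x ^ 2 * Real.exp (-b * x ^ 2) = Real.sqrt (π / b) / (2 * b) := by
  have hint2 : Integrable fun x : ℝ => x ^ 2 * Real.exp (-b * x ^ 2) := by
    have := integrable_rpow_mul_exp_neg_mul_sq hb (s := 2) (by norm_num)
    simpa [Real.rpow_natCast] using this
  have hderiv : ∀ x : ℝ, HasDerivAt (fun x : ℝ => x * Real.exp (-b * x ^ 2))
      (Real.exp (-b * x ^ 2) - 2 * b * (x ^ 2 * Real.exp (-b * x ^ 2))) x := by
    intro x
    have h1 : HasDerivAt (fun x : ℝ => -b * x ^ 2) (-b * (2 * x)) x := by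
      simpa using (hasDerivAt_pow 2 x).const_mul (-b)
    have h3 : HasDerivAt (fun x : ℝ => x * Real.exp (-b * x ^ 2)) _ x := (hasDerivAt_id x).mul h1.exp
    convert h3 using 1
    simp
    ring
  have hzero := integral_eq_zero_of_hasDerivAt_of_integrable hderiv
    ((integrable_exp_neg_mul_sq hb).sub (hint2.const_mul (2 * b)))
    (integrable_mul_exp_neg_mul_sq hb)
  rw [integral_sub (integrable_exp_neg_mul_sq hb) (hint2.const_mul (2 * b)),
    integral_const_mul, integral_gaussian, sub_eq_zero] at hzero
  rw [eq_div_iff (by positivity), mul_comm, ← hzero]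

lemma lintegral_sq_gaussianReal {v : ℝ≥0} (hv : v ≠ 0) :
    ∫⁻ x : ℝ, ENNReal.ofReal (x ^ 2) ∂(gaussianReal 0 v) = ENNReal.ofReal v := by
  have hv' : (0 : ℝ) < v := by positivity
  set b : ℝ := (2 * (v : ℝ))⁻¹ with hbdef
  have hb : 0 < b := by positivity
  have key : ∀ x : ℝ, gaussianPDFReal 0 v x * x ^ 2
      = (Real.sqrt (2 * π * v))⁻¹ * (x ^ 2 * Real.exp (-b * x ^ 2)) := by
    intro x
    have harg : -(x - 0) ^ 2 / (2 * (v : ℝ)) = -b * x ^ 2 := by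
      rw [hbdef]; ring
    simp only [gaussianPDFReal, harg]
    ring
  have hint : Integrable fun x : ℝ => gaussianPDFReal 0 v x * x ^ 2 := by
    rw [show (fun x : ℝ => gaussianPDFReal 0 v x * x ^ 2)
        = fun x : ℝ => (Real.sqrt (2 * π * v))⁻¹ * (x ^ 2 * Real.exp (-b * x ^ 2)) from
      funext key]
    have h2r : ∀ x : ℝ, x ^ (2:ℝ) = x ^ (2:ℕ) := fun x => by
      rw [show (2:ℝ) = ((2:ℕ):ℝ) by norm_num, Real.rpow_natCast]
    have hi := integrable_rpow_mul_exp_neg_mul_sq hb (s := 2) (by norm_num)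
    simp only [h2r] at hi
    exact hi.const_mul _
  have hval : ∫ x : ℝ, gaussianPDFReal 0 v x * x ^ 2 = v := by
    simp only [funext key]
    rw [integral_const_mul, integral_sq_gauss hb]
    have h1 : π / b = 2 * π * v := by rw [hbdef]; field_simp
    have h2 : (0:ℝ) < Real.sqrt (2 * π * v) := Real.sqrt_pos.mpr (by positivity)
    rw [h1, hbdef]
    field_simp
  rw [gaussianReal_of_var_ne_zero 0 hv,
    lintegral_withDensity_eq_lintegral_mul _ (measurable_gaussianPDF 0 v)
      (by exact measurable_id.pow_const 2 |>.ennreal_ofReal)]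
  have : ∀ x : ℝ, (gaussianPDF 0 v * fun x => ENNReal.ofReal (x ^ 2)) x
      = ENNReal.ofReal (gaussianPDFReal 0 v x * x ^ 2) := by
    intro x
    simp [gaussianPDF, ← ENNReal.ofReal_mul (gaussianPDFReal_nonneg 0 v x)]
  rw [funext this, ← ofReal_integral_eq_lintegral_ofReal hint
    (by filter_upwards with x
        exact mul_nonneg (gaussianPDFReal_nonneg 0 v x) (sq_nonneg x)), hval]

lemma pi_map_eval {ι : Type*} [Fintype ι] [DecidableEq ι] {α : ι → Type*}
    [∀ i, MeasurableSpace (α i)] (μ : ∀ i, Measure (α i)) [∀ i, IsProbabilityMeasure (μ i)]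
    (i : ι) : (Measure.pi μ).map (Function.eval i) = μ i := by
  ext s hs
  rw [Measure.map_apply (measurable_pi_apply i) hs, Set.eval_preimage, Measure.pi_pi]
  rw [Finset.prod_eq_single i (fun b _ hb => by simp [Function.update_of_ne hb])
    (fun h => absurd (Finset.mem_univ i) h), Function.update_self]

lemma lintegral_pair {v : ℝ≥0} (hv : v ≠ 0) :
    ∫⁻ p : ℝ × ℝ, ENNReal.ofReal (p.1 ^ 2 + p.2 ^ 2)
        ∂((gaussianReal 0 v).prod (gaussianReal 0 v))
      = 2 * ENNReal.ofReal v := by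
  have hmeq : ∀ p : ℝ × ℝ, ENNReal.ofReal (p.1 ^ 2 + p.2 ^ 2)
      = ENNReal.ofReal (p.1 ^ 2) + ENNReal.ofReal (p.2 ^ 2) := fun p =>
    ENNReal.ofReal_add (sq_nonneg _) (sq_nonneg _)
  simp only [hmeq]
  rw [lintegral_add_left (by exact measurable_fst.pow_const 2 |>.ennreal_ofReal),
    lintegral_prod _ (by exact (measurable_fst.pow_const 2).ennreal_ofReal.aemeasurable),
    lintegral_prod _ (by exact (measurable_snd.pow_const 2).ennreal_ofReal.aemeasurable)]
  simp only [lintegral_sq_gaussianReal hv, lintegral_const, measure_univ, mul_one]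
  ring

/-- If `tr h^{t-1} = ∑ λₙ^{t-1} < ∞`, then the Gaussian measures `μ_{0,K}`
satisfy the Chebyshev-type bound
`μ_{0,K}({u : ‖u‖_{ℌ^t} ≥ R}) ≤ R⁻² tr[h^{t-1}]` uniformly in `K`,
where `‖u‖²_{ℌ^t} = ∑_j λ_j^t |⟨u,u_j⟩|²`; hence the family is tight in `ℌ^t`. -/
theorem cylGaussian_tight
    (lam : ℕ → ℝ) (hlam : ∀ n, 0 < lam n) (t : ℝ)
    (htr : Summable fun n => lam n ^ (t - 1))
    (R : ℝ) (hR : 0 < R) (K : ℕ) :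
    cylGaussian lam K
        {a : Fin (K + 1) → ℝ × ℝ |
          R ^ 2 ≤ ∑ j : Fin (K + 1), lam j ^ t * (((a j).1) ^ 2 + ((a j).2) ^ 2)}
      ≤ ENNReal.ofReal (R⁻¹ ^ 2 * ∑' n, lam n ^ (t - 1)) := by
  have hvpos : ∀ j : Fin (K + 1), (0 : ℝ) < 1 / (2 * lam j) := fun j => by
    have := hlam j; positivity
  have hv : ∀ j : Fin (K + 1), Real.toNNReal (1 / (2 * lam j)) ≠ 0 := fun j =>
    (Real.toNNReal_pos.mpr (hvpos j)).ne'
  set ν : Fin (K + 1) → Measure (ℝ × ℝ) := fun j =>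
    (gaussianReal 0 (Real.toNNReal (1 / (2 * lam j)))).prod
      (gaussianReal 0 (Real.toNNReal (1 / (2 * lam j)))) with hν
  have hμK : cylGaussian lam K = Measure.pi ν := rfl
  set g : (Fin (K + 1) → ℝ × ℝ) → ℝ :=
    fun a => ∑ j : Fin (K + 1), lam j ^ t * (((a j).1) ^ 2 + ((a j).2) ^ 2) with hg
  have hgm : Measurable g := by
    apply Finset.measurable_sum
    intro j _
    exact ((((measurable_pi_apply j).fst.pow_const 2).add
      ((measurable_pi_apply j).snd.pow_const 2)).const_mul _)
  have hε0 : ENNReal.ofReal (R ^ 2) ≠ 0 := (ENNReal.ofReal_pos.mpr (by positivity)).ne'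
  have markov := meas_ge_le_lintegral_div (μ := cylGaussian lam K)
    hgm.ennreal_ofReal.aemeasurable hε0 ENNReal.ofReal_ne_top
  have hsub : {a : Fin (K + 1) → ℝ × ℝ | R ^ 2 ≤ g a}
      ⊆ {a | ENNReal.ofReal (R ^ 2) ≤ ENNReal.ofReal (g a)} :=
    fun a ha => ENNReal.ofReal_le_ofReal ha
  refine le_trans (measure_mono hsub) (le_trans markov ?_)
  have hlint : ∫⁻ a, ENNReal.ofReal (g a) ∂(cylGaussian lam K)
      = ∑ j : Fin (K + 1), ENNReal.ofReal (lam j ^ (t - 1)) := by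
    have hsum : ∀ a, ENNReal.ofReal (g a)
        = ∑ j : Fin (K + 1),
            ENNReal.ofReal (lam j ^ t * (((a j).1) ^ 2 + ((a j).2) ^ 2)) := fun a =>
      ENNReal.ofReal_sum_of_nonneg fun j _ => by
        have := hlam j
        positivity
    simp only [hsum]
    rw [lintegral_finset_sum (f := fun (j : Fin (K + 1)) (a : Fin (K + 1) → ℝ × ℝ) => ENNReal.ofReal (lam j ^ t * (((a j).1) ^ 2 + ((a j).2) ^ 2))) _ (fun j _ =>
      ((((measurable_pi_apply j).fst.pow_const 2).add
        ((measurable_pi_apply j).snd.pow_const 2)).const_mul _).ennreal_ofReal)]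
    refine Finset.sum_congr rfl fun j _ => ?_
    have h1 : ∀ a : Fin (K + 1) → ℝ × ℝ,
        ENNReal.ofReal (lam j ^ t * (((a j).1) ^ 2 + ((a j).2) ^ 2))
          = ENNReal.ofReal (lam j ^ t)
            * ENNReal.ofReal ((((a j).1) ^ 2 + ((a j).2) ^ 2)) := fun a =>
      ENNReal.ofReal_mul (Real.rpow_nonneg (hlam j).le t)
    simp only [h1]
    rw [lintegral_const_mul _ (by
      exact (((measurable_pi_apply j).fst.pow_const 2).add
        ((measurable_pi_apply j).snd.pow_const 2)).ennreal_ofReal)]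
    have hmp : MeasurePreserving (Function.eval j) (cylGaussian lam K) (ν j) :=
      ⟨measurable_pi_apply j, by rw [hμK]; exact pi_map_eval ν j⟩
    have heval : ∫⁻ a, ENNReal.ofReal (((a j).1) ^ 2 + ((a j).2) ^ 2) ∂(cylGaussian lam K)
        = ∫⁻ p : ℝ × ℝ, ENNReal.ofReal (p.1 ^ 2 + p.2 ^ 2) ∂(ν j) :=
      hmp.lintegral_comp (by
        exact ((measurable_fst.pow_const 2).add (measurable_snd.pow_const 2)).ennreal_ofReal)
    rw [heval, hν]
    rw [lintegral_pair (hv j), Real.coe_toNNReal _ (hvpos j).le]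
    rw [show (2 : ℝ≥0∞) = ENNReal.ofReal 2 by simp,
      ← ENNReal.ofReal_mul (by norm_num : (0:ℝ) ≤ 2),
      ← ENNReal.ofReal_mul (Real.rpow_nonneg (hlam j).le t)]
    congr 1
    have h2 : (2 : ℝ) * (1 / (2 * lam j)) = (lam j)⁻¹ := by
      have := (hlam j).ne'
      field_simp
    rw [h2, ← Real.rpow_neg_one, ← Real.rpow_add (hlam j), ← sub_eq_add_neg]
  rw [hlint]
  have hsum2 : ∑ j : Fin (K + 1), ENNReal.ofReal (lam j ^ (t - 1))
      = ENNReal.ofReal (∑ j ∈ Finset.range (K + 1), lam j ^ (t - 1)) := by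
    rw [ENNReal.ofReal_sum_of_nonneg (fun j _ => Real.rpow_nonneg (hlam j).le _),
      ← Fin.sum_univ_eq_sum_range]
  rw [hsum2]
  have hle : ∑ j ∈ Finset.range (K + 1), lam j ^ (t - 1) ≤ ∑' n, lam n ^ (t - 1) :=
    Summable.sum_le_tsum _ (fun i _ => Real.rpow_nonneg (hlam i).le _) htr
  calc ENNReal.ofReal (∑ j ∈ Finset.range (K + 1), lam j ^ (t - 1)) / ENNReal.ofReal (R ^ 2)
      ≤ ENNReal.ofReal (∑' n, lam n ^ (t - 1)) / ENNReal.ofReal (R ^ 2) :=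
        ENNReal.div_le_div_right (ENNReal.ofReal_le_ofReal hle) _
    _ = ENNReal.ofReal (R⁻¹ ^ 2 * ∑' n, lam n ^ (t - 1)) := by
        rw [← ENNReal.ofReal_div_of_pos (by positivity)]
        congr 1
        rw [inv_pow, div_eq_inv_mul]
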